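/- In the quadratic Crawford–Sobel model with uniform prior on [0,1], in an n-segment partition equilibrium with boundary points a_i = i(1-2n(n-1)b)/n + 2i(i-1)b, the receiver's ex-ante expected utility equals -(1/(12n²)) - b²(n²-1)/3, which is strictly increasing in n (for n(n-1) < 1/(2b)); hence the equilibrium with the most segments ex-ante Pareto dominates, for the receiver, all equilibria with fewer segments. -/

import Mathlib

lemma sum_cube_aux (c b : ℝ) : ∀ k : ℕ,
    ∑ i ∈ Finset.range k, (c + 4 * (i : ℝ) * b) ^ 3 =
      k * c ^ 3 + 6 * b * c ^ 2 * k * (k - 1)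
        + 8 * b ^ 2 * c * k * (k - 1) * (2 * k - 1)
        + 16 * b ^ 3 * k ^ 2 * (k - 1) ^ 2 := by
  intro k
  induction k with
  | zero => simp
  | succ k ih =>
    rw [Finset.sum_range_succ, ih]
    push_cast
    ring

/-- Receiver's ex-ante expected utility in the n-segment equilibrium equals
`-(1/(12 n^2)) - b^2 (n^2 - 1)/3`, strictly increasing in `n`. -/
theorem stmt_3 (b : ℝ) (hb : 0 < b)
    (a : ℕ → ℕ → ℝ)
    (ha : ∀ n i, a n i =
      (i : ℝ) * (1 - 2 * (n : ℝ) * ((n : ℝ) - 1) * b) / (n : ℝ)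
        + 2 * (i : ℝ) * ((i : ℝ) - 1) * b)
    (EU : ℕ → ℝ)
    (hEU : ∀ n, EU n = -∑ i ∈ Finset.range n, (a n (i + 1) - a n i) ^ 3 / 12) :
    (∀ n : ℕ, 1 ≤ n →
      EU n = -(1 / (12 * (n : ℝ) ^ 2)) - b ^ 2 * ((n : ℝ) ^ 2 - 1) / 3) ∧
    (∀ m n : ℕ, 1 ≤ m → m < n → (n : ℝ) * ((n : ℝ) - 1) < 1 / (2 * b) →
      EU m < EU n) := by
  have key : ∀ n : ℕ, 1 ≤ n →
      EU n = -(1 / (12 * (n : ℝ) ^ 2)) - b ^ 2 * ((n : ℝ) ^ 2 - 1) / 3 := by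
    intro n hn
    have hn0 : (n : ℝ) ≠ 0 := by positivity
    set c : ℝ := (1 - 2 * (n : ℝ) * ((n : ℝ) - 1) * b) / (n : ℝ) with hc
    have hstep : ∀ i : ℕ, a n (i + 1) - a n i = c + 4 * (i : ℝ) * b := by
      intro i
      rw [ha, ha, hc]
      push_cast
      field_simp
      ring
    rw [hEU]
    have : ∑ i ∈ Finset.range n, (a n (i + 1) - a n i) ^ 3 / 12 =
        (∑ i ∈ Finset.range n, (c + 4 * (i : ℝ) * b) ^ 3) / 12 := by
      rw [Finset.sum_div]
      exact Finset.sum_congr rfl fun i _ => by rw [hstep i]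
    rw [this, sum_cube_aux, hc]
    field_simp
    ring
  refine ⟨key, fun m n hm hmn hbound => ?_⟩
  have hn : 1 ≤ n := hm.trans hmn.le
  rw [key m hm, key n hn]
  have hmR : (1 : ℝ) ≤ (m : ℝ) := by exact_mod_cast hm
  have hmnR : (m : ℝ) + 1 ≤ (n : ℝ) := by exact_mod_cast hmn
  have hm0 : (0 : ℝ) < (m : ℝ) := by linarith
  have hn0 : (0 : ℝ) < (n : ℝ) := by linarith
  have hb2 : (0 : ℝ) < 2 * b := by linarith
  have h1 : (n : ℝ) * ((n : ℝ) - 1) * (2 * b) < 1 := by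
    rw [lt_div_iff₀ hb2] at hbound
    linarith
  have h2 : 2 * b * (m : ℝ) * (n : ℝ) < 1 := by nlinarith
  have h3 : (0 : ℝ) < 2 * b * (m : ℝ) * (n : ℝ) := by positivity
  have h4 : 4 * b ^ 2 * (m : ℝ) ^ 2 * (n : ℝ) ^ 2 < 1 := by nlinarith
  have hkey : (0 : ℝ) <
      ((n : ℝ) ^ 2 - (m : ℝ) ^ 2) * (1 - 4 * b ^ 2 * (m : ℝ) ^ 2 * (n : ℝ) ^ 2)
        / (12 * (m : ℝ) ^ 2 * (n : ℝ) ^ 2) := by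
    apply div_pos
    · apply mul_pos
      · nlinarith
      · linarith
    · positivity
  have heq : ((n : ℝ) ^ 2 - (m : ℝ) ^ 2) * (1 - 4 * b ^ 2 * (m : ℝ) ^ 2 * (n : ℝ) ^ 2)
        / (12 * (m : ℝ) ^ 2 * (n : ℝ) ^ 2) =
      (-(1 / (12 * (n : ℝ) ^ 2)) - b ^ 2 * ((n : ℝ) ^ 2 - 1) / 3) -
      (-(1 / (12 * (m : ℝ) ^ 2)) - b ^ 2 * ((m : ℝ) ^ 2 - 1) / 3) := by
    field_simp
    ring
  linarith [heq ▸ hkey]
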